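/- Define a relation on ℤⁿ by x < y iff N(x) < N(y) lexicographically, where N(x) = (‖x‖_∞, m(x), n − g(x), ‖x‖₁), m(x) is the number of coordinates of x with absolute value equal to ‖x‖_∞, and g(x) is the number of coordinates x_i with 0 < |x_i| < ‖x‖_∞. Then this relation is a strongly Artinian partial order: it is super-Artinian and every set {y : y < x} is finite. -/

import Mathlib

/-- The sup-norm `‖x‖_∞` of `x ∈ ℤⁿ`. -/
def normInf (n : ℕ) (x : Fin n → ℤ) : ℕ := Finset.univ.sup fun i => (x i).natAbs

/-- `m(x)`: the number of maximal coordinates (those with `|x_i| = ‖x‖_∞`). -/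
def maxCount (n : ℕ) (x : Fin n → ℤ) : ℕ :=
  (Finset.univ.filter fun i => (x i).natAbs = normInf n x).card

/-- `g(x)`: the number of good coordinates (those with `0 < |x_i| < ‖x‖_∞`). -/
def goodCount (n : ℕ) (x : Fin n → ℤ) : ℕ :=
  (Finset.univ.filter fun i => 0 < (x i).natAbs ∧ (x i).natAbs < normInf n x).card

/-- The `ℓ¹`-norm `‖x‖₁`. -/
def norm1 (n : ℕ) (x : Fin n → ℤ) : ℕ := ∑ i, (x i).natAbs

/-- `x < y` iff `N(x) < N(y)` lexicographically, where
`N(x) = (‖x‖_∞, m(x), n − g(x), ‖x‖₁)`. -/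
def vecLt (n : ℕ) (x y : Fin n → ℤ) : Prop :=
  normInf n x < normInf n y ∨ (normInf n x = normInf n y ∧
    (maxCount n x < maxCount n y ∨ (maxCount n x = maxCount n y ∧
      (n - goodCount n x < n - goodCount n y ∨ (n - goodCount n x = n - goodCount n y ∧
        norm1 n x < norm1 n y)))))

/-- The measure `N(x)` as an element of a lexicographic product. -/
def vecQ (n : ℕ) (x : Fin n → ℤ) : ℕ ×ₗ (ℕ ×ₗ (ℕ ×ₗ ℕ)) :=
  toLex (normInf n x, toLex (maxCount n x, toLex (n - goodCount n x, norm1 n x)))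

lemma vecLt_iff (n : ℕ) (x y : Fin n → ℤ) : vecLt n x y ↔ vecQ n x < vecQ n y := by
  simp [vecLt, vecQ, Prod.Lex.lt_iff]

theorem stmt_1 (n : ℕ) :
    (∀ x, ¬ vecLt n x x) ∧ Transitive (vecLt n) ∧
    (¬ ∃ f : ℕ → (Fin n → ℤ), ∀ k, vecLt n (f (k + 1)) (f k)) ∧
    (∀ p q, ¬ vecLt n p q → ¬ vecLt n q p →
      ((∀ r, vecLt n r p ↔ vecLt n r q) ∧ (∀ r, vecLt n p r ↔ vecLt n q r))) ∧
    (∀ x, {y | vecLt n y x}.Finite) := by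
  refine ⟨?_, ?_, ?_, ?_, ?_⟩
  · intro x h
    rw [vecLt_iff] at h
    exact lt_irrefl _ h
  · intro a b c hab hbc
    rw [vecLt_iff] at *
    exact lt_trans hab hbc
  · rintro ⟨f, hf⟩
    simp only [vecLt_iff] at hf
    exact (RelEmbedding.natGT (fun k => vecQ n (f k)) hf).not_wellFounded
      (wellFounded_lt)
  · intro p q hpq hqp
    rw [vecLt_iff] at hpq hqp
    have h : vecQ n p = vecQ n q := le_antisymm (not_lt.mp hqp) (not_lt.mp hpq)
    constructor <;> intro r <;> rw [vecLt_iff, vecLt_iff, h]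
  · intro x
    apply Set.Finite.subset
      (Set.Finite.pi (fun i : Fin n => Set.finite_Icc (-(normInf n x : ℤ)) (normInf n x)))
    intro y hy
    have h1 : normInf n y ≤ normInf n x := by
      simp only [Set.mem_setOf_eq, vecLt_iff] at hy
      rcases Prod.Lex.lt_iff.mp hy with h | ⟨h, _⟩
      · exact le_of_lt h
      · exact le_of_eq h
    intro i _
    have h2 : (y i).natAbs ≤ normInf n y := by
      unfold normInf; exact Finset.le_sup (f := fun i => (y i).natAbs) (Finset.mem_univ i)
    have h3 : (y i).natAbs ≤ normInf n x := le_trans h2 h1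
    simp only [Set.mem_Icc]
    omega
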